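/- arXiv:2010.15819 — 2 statements merged into one kernel-verified Lean document; each statement's English description precedes it below -/
import Mathlib

section
/- Let A_k, Â_k ∈ ℝ^{I_k×r_k} have orthonormal columns for k = 1, …, N, and let M = A₁ ⊗ A₂ ⊗ ⋯ ⊗ A_N, M̂ = Â₁ ⊗ Â₂ ⊗ ⋯ ⊗ Â_N. Then ‖sin Θ(M, M̂)‖ ≤ 2^{(N−1)/2} · max_k ‖sin Θ(A_k, Â_k)‖. -/
open Matrix

/-- Smallest singular value of a real matrix. -/
noncomputable def sMin {m n : Type*} [Fintype m] [Fintype n] [DecidableEq n]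
    (A : Matrix m n ℝ) : ℝ :=
  Real.sqrt (⨅ i, (show (Aᵀ * A).IsHermitian by
    simpa using Matrix.isHermitian_conjTranspose_mul_self A).eigenvalues i)

/-- Sine of the largest canonical angle between the column spaces of two matrices
with orthonormal columns: `‖sin Θ(X,Y)‖ = √(1 − σ_min(XᵀY)²)`. -/
noncomputable def sinTheta {m n : Type*} [Fintype m] [Fintype n] [DecidableEq n]
    (X Y : Matrix m n ℝ) : ℝ :=
  Real.sqrt (1 - sMin (Xᵀ * Y) ^ 2)

section Helpers
open Finset

variable {n : Type*} [Fintype n] [DecidableEq n]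

lemma myDot_eigenbasis_self {H : Matrix n n ℝ} (hH : H.IsHermitian) (i : n) :
    star ⇑(hH.eigenvectorBasis i) ⬝ᵥ ⇑(hH.eigenvectorBasis i) = 1 := by
  have h1 : ‖hH.eigenvectorBasis i‖ = 1 := hH.eigenvectorBasis.orthonormal.1 i
  have h2 := EuclideanSpace.inner_eq_star_dotProduct (𝕜 := ℝ)
    (hH.eigenvectorBasis i) (hH.eigenvectorBasis i)
  rw [@inner_self_eq_norm_sq_to_K ℝ, h1] at h2
  simpa using h2.symm

lemma le_eig_of_psd {H : Matrix n n ℝ} (hH : H.IsHermitian) {c : ℝ}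
    (h : (H - c • 1).PosSemidef) (i : n) : c ≤ hH.eigenvalues i := by
  have hv := hH.eigenvalues_eq i
  set v := ⇑(hH.eigenvectorBasis i) with hvdef
  have h2 := h.dotProduct_mulVec_nonneg v
  rw [sub_mulVec, dotProduct_sub, smul_mulVec, one_mulVec, dotProduct_smul,
    myDot_eigenbasis_self hH i] at h2
  simp only [RCLike.re_to_real] at hv
  rw [← hv] at h2
  simpa using h2

lemma eig_le_of_psd {H : Matrix n n ℝ} (hH : H.IsHermitian) {c : ℝ}
    (h : (c • 1 - H).PosSemidef) (i : n) : hH.eigenvalues i ≤ c := by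
  have hv := hH.eigenvalues_eq i
  set v := ⇑(hH.eigenvectorBasis i) with hvdef
  have h2 := h.dotProduct_mulVec_nonneg v
  rw [sub_mulVec, dotProduct_sub, smul_mulVec, one_mulVec, dotProduct_smul,
    myDot_eigenbasis_self hH i] at h2
  simp only [RCLike.re_to_real] at hv
  rw [← hv] at h2
  simpa using h2

lemma psd_sub_of_le_eig {H : Matrix n n ℝ} (hH : H.IsHermitian) {c : ℝ}
    (h : ∀ i, c ≤ hH.eigenvalues i) : (H - c • 1).PosSemidef := by
  have hU : (hH.eigenvectorUnitary : Matrix n n ℝ) * star (hH.eigenvectorUnitary : Matrix n n ℝ)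
      = 1 := (Matrix.mem_unitaryGroup_iff).mp hH.eigenvectorUnitary.2
  have key : H - c • 1 = (hH.eigenvectorUnitary : Matrix n n ℝ) *
      diagonal (fun i => hH.eigenvalues i - c) * star (hH.eigenvectorUnitary : Matrix n n ℝ) := by
    conv_lhs => rw [hH.spectral_theorem, Unitary.conjStarAlgAut_apply]
    have : (diagonal (fun i => hH.eigenvalues i - c) : Matrix n n ℝ)
        = diagonal (RCLike.ofReal ∘ hH.eigenvalues) - c • 1 := by
      rw [smul_one_eq_diagonal, diagonal_sub]
      rfl
    rw [this, Matrix.mul_sub, Matrix.sub_mul, Matrix.mul_smul, Matrix.mul_one,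
      Matrix.smul_mul, hU]
  rw [key]
  exact (posSemidef_diagonal_iff.mpr fun i => sub_nonneg.mpr (h i)).mul_mul_conjTranspose_same _

lemma pi_dot {N : ℕ} {I r s : Fin N → ℕ}
    (X : ∀ k, Matrix (Fin (I k)) (Fin (r k)) ℝ) (Y : ∀ k, Matrix (Fin (I k)) (Fin (s k)) ℝ)
    (j : ∀ k, Fin (r k)) (j' : ∀ k, Fin (s k)) :
    ∑ i : (∀ k, Fin (I k)), (∏ k, X k (i k) (j k)) * ∏ k, Y k (i k) (j' k)
      = ∏ k, ((X k)ᵀ * Y k) (j k) (j' k) := by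
  simp_rw [← Finset.prod_mul_distrib, Matrix.mul_apply, Matrix.transpose_apply]
  rw [Finset.prod_univ_sum, Fintype.piFinset_univ]

open scoped MatrixOrder in
lemma posSemidef_iff_eq_transpose_mul_self' {m : Type*} [Fintype m] [DecidableEq m]
    {M : Matrix m m ℝ} : M.PosSemidef ↔ ∃ B : Matrix m m ℝ, M = Bᴴ * B :=
  ⟨fun h => CStarAlgebra.nonneg_iff_eq_star_mul_self.mp h.nonneg,
    fun ⟨B, hB⟩ => hB ▸ Matrix.posSemidef_conjTranspose_mul_self B⟩

lemma pi_posSemidef {N : ℕ} {r : Fin N → ℕ} (Q : ∀ k, Matrix (Fin (r k)) (Fin (r k)) ℝ)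
    (hQ : ∀ k, (Q k).PosSemidef) :
    Matrix.PosSemidef (Matrix.of fun j j' : ∀ k, Fin (r k) => ∏ k, Q k (j k) (j' k)) := by
  choose B hB using fun k => posSemidef_iff_eq_transpose_mul_self'.mp (hQ k)
  rw [posSemidef_iff_eq_transpose_mul_self']
  refine ⟨Matrix.of fun i j : ∀ k, Fin (r k) => ∏ k, B k (i k) (j k), ?_⟩
  ext j j'
  rw [Matrix.mul_apply]
  simp only [Matrix.of_apply, Matrix.conjTranspose_apply, star_trivial]
  rw [pi_dot]
  refine Finset.prod_congr rfl fun k _ => ?_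
  rw [hB k]
  rw [Matrix.conjTranspose_eq_transpose_of_trivial]

lemma psd_sum {ι n : Type*} [Fintype n] (s : Finset ι) (f : ι → Matrix n n ℝ)
    (h : ∀ i ∈ s, (f i).PosSemidef) : (∑ i ∈ s, f i).PosSemidef := by
  classical
  induction s using Finset.induction_on with
  | empty => simpa using Matrix.PosSemidef.zero
  | insert _ _ hx ih =>
    rw [Finset.sum_insert hx]
    exact ((h _ (Finset.mem_insert_self _ _)).add
      (ih fun i hi => h i (Finset.mem_insert_of_mem hi)))

lemma one_sub_prod_le {ι : Type*} (s : Finset ι) (f : ι → ℝ)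
    (h0 : ∀ i ∈ s, 0 ≤ f i) (h1 : ∀ i ∈ s, f i ≤ 1) :
    1 - ∏ i ∈ s, f i ≤ ∑ i ∈ s, (1 - f i) := by
  classical
  induction s using Finset.induction_on with
  | empty => simp
  | @insert a s ha ih =>
    rw [Finset.prod_insert ha, Finset.sum_insert ha]
    have hp0 : 0 ≤ ∏ i ∈ s, f i :=
      Finset.prod_nonneg fun i hi => h0 i (Finset.mem_insert_of_mem hi)
    have hp1 : ∏ i ∈ s, f i ≤ 1 :=
      Finset.prod_le_one (fun i hi => h0 i (Finset.mem_insert_of_mem hi))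
        (fun i hi => h1 i (Finset.mem_insert_of_mem hi))
    have ha0 : 0 ≤ f a := h0 a (Finset.mem_insert_self _ _)
    have ha1 : f a ≤ 1 := h1 a (Finset.mem_insert_self _ _)
    have ihs := ih (fun i hi => h0 i (Finset.mem_insert_of_mem hi))
      (fun i hi => h1 i (Finset.mem_insert_of_mem hi))
    nlinarith [mul_nonneg (sub_nonneg.mpr ha1) (sub_nonneg.mpr hp1)]

lemma one_pi_apply {N : ℕ} {r : Fin N → ℕ} (j j' : ∀ k, Fin (r k)) :
    ∏ k, (1 : Matrix (Fin (r k)) (Fin (r k)) ℝ) (j k) (j' k)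
      = (1 : Matrix (∀ k, Fin (r k)) (∀ k, Fin (r k)) ℝ) j j' := by
  by_cases h : j = j'
  · subst h
    simp [Matrix.one_apply]
  · obtain ⟨k, hk⟩ := Function.ne_iff.mp h
    rw [Matrix.one_apply_ne h, Finset.prod_eq_zero (Finset.mem_univ k)]
    exact Matrix.one_apply_ne hk

lemma pi_psd_sub_smul {N : ℕ} {r : Fin N → ℕ} (Hm : ∀ k, Matrix (Fin (r k)) (Fin (r k)) ℝ)
    (c : Fin N → ℝ) (hc0 : ∀ k, 0 ≤ c k)
    (hP : ∀ k, (Hm k - c k • 1).PosSemidef) :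
    (Matrix.of (fun j j' : ∀ k, Fin (r k) => ∏ k, Hm k (j k) (j' k))
      - (∏ k, c k) • 1).PosSemidef := by
  classical
  set P : ∀ k, Matrix (Fin (r k)) (Fin (r k)) ℝ := fun k => Hm k - c k • 1 with hPdef
  set K : Finset (Fin N) → Matrix (∀ k, Fin (r k)) (∀ k, Fin (r k)) ℝ := fun t =>
    Matrix.of fun j j' => ∏ k, (if k ∈ t then P k else c k • 1) (j k) (j' k) with hKdef
  have hK : ∀ t, (K t).PosSemidef := by
    intro t
    apply pi_posSemidef
    intro k
    by_cases hkt : k ∈ t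
    · simpa [hkt] using hP k
    · simp only [hkt, if_false]
      rw [Matrix.smul_one_eq_diagonal]
      exact Matrix.posSemidef_diagonal_iff.mpr fun _ => hc0 k
  have hsum : Matrix.of (fun j j' : ∀ k, Fin (r k) => ∏ k, Hm k (j k) (j' k))
      = ∑ t ∈ Finset.univ.powerset, K t := by
    ext j j'
    rw [Matrix.sum_apply]
    have h1 : ∀ k ∈ Finset.univ, Hm k (j k) (j' k)
        = P k (j k) (j' k) + (c k • (1 : Matrix (Fin (r k)) (Fin (r k)) ℝ)) (j k) (j' k) := by
      intro k _
      simp [hPdef]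
    rw [Matrix.of_apply, Finset.prod_congr rfl h1, Finset.prod_add]
    refine Finset.sum_congr rfl fun t ht => ?_
    rw [Finset.mem_powerset] at ht
    simp only [hKdef, Matrix.of_apply]
    rw [← Finset.prod_sdiff ht, mul_comm]
    congr 1
    · exact Finset.prod_congr rfl fun k hk => by rw [if_neg (Finset.mem_sdiff.mp hk).2]
    · exact Finset.prod_congr rfl fun k hk => by rw [if_pos hk]
  have hempty : K ∅ = (∏ k, c k) • 1 := by
    ext j j'
    simp only [hKdef, Matrix.of_apply, Finset.notMem_empty, if_false, Matrix.smul_apply,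
      smul_eq_mul]
    rw [Finset.prod_mul_distrib, one_pi_apply]
  have key : Matrix.of (fun j j' : ∀ k, Fin (r k) => ∏ k, Hm k (j k) (j' k))
      - (∏ k, c k) • 1 = ∑ t ∈ Finset.univ.powerset.erase ∅, K t := by
    rw [hsum, ← hempty, ← Finset.add_sum_erase _ K (Finset.empty_mem_powerset _)]
    abel
  rw [key]
  exact psd_sum _ _ fun t _ => hK t

end Helpers

/-- Let `A_k, Â_k ∈ ℝ^{I_k×r_k}` have orthonormal columns for `k = 1, …, N`, and let
`M`, `M̂` be the Kronecker products of the `A_k` resp. `Â_k` (realized entrywise on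
product index types: `M i j = ∏ k, A k (i k) (j k)`).  Then
`‖sin Θ(M, M̂)‖ ≤ 2^{(N−1)/2} · max_k ‖sin Θ(A_k, Â_k)‖`. -/
theorem sinTheta_kronecker_N {N : ℕ} (hN : 0 < N) (I r : Fin N → ℕ)
    (A Ah : ∀ k, Matrix (Fin (I k)) (Fin (r k)) ℝ)
    (hA : ∀ k, (A k)ᵀ * A k = 1) (hAh : ∀ k, (Ah k)ᵀ * Ah k = 1)
    (M Mh : Matrix (∀ k, Fin (I k)) (∀ k, Fin (r k)) ℝ)
    (hM : ∀ i j, M i j = ∏ k, A k (i k) (j k))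
    (hMh : ∀ i j, Mh i j = ∏ k, Ah k (i k) (j k)) :
    haveI : Nonempty (Fin N) := Fin.pos_iff_nonempty.mp hN
    sinTheta M Mh ≤ (2 : ℝ) ^ (((N : ℝ) - 1) / 2) * ⨆ k, sinTheta (A k) (Ah k) := by
  haveI hNE : Nonempty (Fin N) := Fin.pos_iff_nonempty.mp hN
  classical
  set Gk : ∀ k, Matrix (Fin (r k)) (Fin (r k)) ℝ := fun k => (A k)ᵀ * Ah k with hGkdef
  set c : Fin N → ℝ := fun k =>
    ⨅ i, (show ((Gk k)ᵀ * Gk k).IsHermitian by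
      simpa using Matrix.isHermitian_conjTranspose_mul_self (Gk k)).eigenvalues i with hcdef
  have hHkpsd : ∀ k, ((Gk k)ᴴ * Gk k).PosSemidef := fun k =>
    Matrix.posSemidef_conjTranspose_mul_self _
  have hc0 : ∀ k, 0 ≤ c k := fun k =>
    Real.iInf_nonneg fun i => (hHkpsd k).eigenvalues_nonneg i
  -- eigenvalues of Hk are ≤ 1
  have hle1 : ∀ k i, (show ((Gk k)ᵀ * Gk k).IsHermitian by
      simpa using Matrix.isHermitian_conjTranspose_mul_self (Gk k)).eigenvalues i ≤ 1 := by
    intro k i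
    apply eig_le_of_psd
    have hPP : (A k * (A k)ᵀ) * (A k * (A k)ᵀ) = A k * (A k)ᵀ := by
      rw [Matrix.mul_assoc, ← Matrix.mul_assoc ((A k)ᵀ), hA k, Matrix.one_mul]
    have hproj : ((1 : Matrix (Fin (I k)) (Fin (I k)) ℝ) - A k * (A k)ᵀ) *
        (((1 : Matrix (Fin (I k)) (Fin (I k)) ℝ) - A k * (A k)ᵀ) * Ah k)
        = ((1 : Matrix (Fin (I k)) (Fin (I k)) ℝ) - A k * (A k)ᵀ) * Ah k := by
      rw [← Matrix.mul_assoc]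
      congr 1
      simp only [Matrix.mul_sub, Matrix.sub_mul, Matrix.mul_one, Matrix.one_mul, hPP]
      abel
    have h1 : (1 : ℝ) • (1 : Matrix (Fin (r k)) (Fin (r k)) ℝ) - (Gk k)ᴴ * Gk k
        = (((1 : Matrix (Fin (I k)) (Fin (I k)) ℝ) - A k * (A k)ᵀ) * Ah k)ᴴ *
          (((1 : Matrix (Fin (I k)) (Fin (I k)) ℝ) - A k * (A k)ᵀ) * Ah k) := by
      simp only [Matrix.conjTranspose_eq_transpose_of_trivial, one_smul, hGkdef]
      rw [Matrix.transpose_mul, Matrix.transpose_mul, Matrix.transpose_transpose,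
        Matrix.transpose_sub, Matrix.transpose_one, Matrix.transpose_mul,
        Matrix.transpose_transpose]
      conv_rhs => rw [Matrix.mul_assoc, hproj]
      rw [Matrix.sub_mul, Matrix.one_mul, Matrix.mul_sub, hAh k]
      simp only [Matrix.mul_assoc]
    rw [← Matrix.conjTranspose_eq_transpose_of_trivial, h1]
    exact Matrix.posSemidef_conjTranspose_mul_self _
  have hc1 : ∀ k, c k ≤ 1 := by
    intro k
    rcases isEmpty_or_nonempty (Fin (r k)) with he | hne
    · have : c k = 0 := by
        rw [hcdef]
        simp only
        rw [iInf, Set.range_eq_empty, Real.sInf_empty]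
      rw [this]; norm_num
    · obtain ⟨i⟩ := hne
      exact le_trans (ciInf_le (Finite.bddBelow_range _) i) (hle1 k i)
  have hPk : ∀ k, ((Gk k)ᴴ * Gk k - c k • 1).PosSemidef := fun k =>
    psd_sub_of_le_eig _ (fun i => ciInf_le (Finite.bddBelow_range _) i)
  -- entries of the big Gram matrices
  have hGentry : ∀ j j', (Mᵀ * Mh) j j' = ∏ k, Gk k (j k) (j' k) := by
    intro j j'
    rw [Matrix.mul_apply]
    have h1 : ∀ i ∈ Finset.univ, Mᵀ j i * Mh i j'
        = (∏ k, A k (i k) (j k)) * ∏ k, Ah k (i k) (j' k) := by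
      intro i _
      rw [Matrix.transpose_apply, hM, hMh]
    rw [Finset.sum_congr rfl h1, pi_dot]
  have hHentry : (Mᵀ * Mh)ᴴ * (Mᵀ * Mh)
      = Matrix.of (fun j j' : ∀ k, Fin (r k) => ∏ k, ((Gk k)ᴴ * Gk k) (j k) (j' k)) := by
    ext j j'
    rw [Matrix.mul_apply, Matrix.of_apply]
    have h1 : ∀ i ∈ Finset.univ, ((Mᵀ * Mh)ᴴ) j i * (Mᵀ * Mh) i j'
        = (∏ k, Gk k (i k) (j k)) * ∏ k, Gk k (i k) (j' k) := by
      intro i _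
      rw [Matrix.conjTranspose_apply, star_trivial, hGentry, hGentry]
    rw [Finset.sum_congr rfl h1, pi_dot]
    exact Finset.prod_congr rfl fun k _ => by
      rw [Matrix.conjTranspose_eq_transpose_of_trivial]
  have hbig : ((Mᵀ * Mh)ᴴ * (Mᵀ * Mh) - (∏ k, c k) • 1).PosSemidef := by
    rw [hHentry]
    exact pi_psd_sub_smul _ c hc0 hPk
  set E : ℝ := ⨅ i, (show ((Mᵀ * Mh)ᵀ * (Mᵀ * Mh)).IsHermitian by
      simpa using Matrix.isHermitian_conjTranspose_mul_self (Mᵀ * Mh)).eigenvalues i with hEdef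
  have hE0 : 0 ≤ E := Real.iInf_nonneg fun i =>
    (Matrix.posSemidef_conjTranspose_mul_self _).eigenvalues_nonneg i
  have hEc : (∏ k, c k) ≤ E := by
    rcases isEmpty_or_nonempty (∀ k, Fin (r k)) with he | hne
    · obtain ⟨k, hk⟩ := isEmpty_pi.mp he
      have hck : c k = 0 := by
        rw [hcdef]
        simp only
        rw [iInf, Set.range_eq_empty, Real.sInf_empty]
      have hE' : E = 0 := by
        rw [hEdef, iInf, Set.range_eq_empty, Real.sInf_empty]
      rw [hE', Finset.prod_eq_zero (Finset.mem_univ k) hck]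
    · exact le_ciInf fun i => le_eig_of_psd _ hbig i
  obtain ⟨k₀, hk₀⟩ := Finite.exists_min c
  have hprod : 1 - ∏ k, c k ≤ 2 ^ (N - 1) * (1 - c k₀) := by
    have h1 : 1 - ∏ k, c k ≤ ∑ k, (1 - c k) :=
      one_sub_prod_le _ _ (fun k _ => hc0 k) (fun k _ => hc1 k)
    have h2 : ∑ k : Fin N, (1 - c k) ≤ ∑ _k : Fin N, (1 - c k₀) :=
      Finset.sum_le_sum fun k _ => by linarith [hk₀ k]
    have h3 : ∑ _k : Fin N, (1 - c k₀) = (N : ℝ) * (1 - c k₀) := by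
      rw [Finset.sum_const, Finset.card_univ, Fintype.card_fin, nsmul_eq_mul]
    have h4 : (N : ℝ) ≤ 2 ^ (N - 1) := by
      have h5 : N ≤ 2 ^ (N - 1) := by
        have := Nat.lt_two_pow_self (n := N - 1)
        omega
      exact_mod_cast h5
    nlinarith [sub_nonneg.mpr (hc1 k₀)]
  -- assemble
  have hsin : sinTheta M Mh = Real.sqrt (1 - E) := by
    rw [sinTheta, sMin, Real.sq_sqrt hE0]
  have hsk : sinTheta (A k₀) (Ah k₀) = Real.sqrt (1 - c k₀) := by
    rw [sinTheta, sMin, Real.sq_sqrt (hc0 k₀)]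
  have hchain : sinTheta M Mh ≤ Real.sqrt (2 ^ (N - 1) * (1 - c k₀)) := by
    rw [hsin]
    exact Real.sqrt_le_sqrt (by linarith)
  have hsqrt : Real.sqrt ((2 : ℝ) ^ (N - 1) * (1 - c k₀))
      = (2 : ℝ) ^ (((N : ℝ) - 1) / 2) * Real.sqrt (1 - c k₀) := by
    rw [Real.sqrt_mul (by positivity)]
    congr 1
    rw [← Real.rpow_natCast 2 (N - 1), Real.sqrt_eq_rpow, ← Real.rpow_mul (by norm_num)]
    congr 1
    rw [Nat.cast_sub hN, Nat.cast_one]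
    ring
  have hpos : (0 : ℝ) ≤ (2 : ℝ) ^ (((N : ℝ) - 1) / 2) := Real.rpow_nonneg (by norm_num) _
  calc sinTheta M Mh ≤ Real.sqrt (2 ^ (N - 1) * (1 - c k₀)) := hchain
    _ = (2 : ℝ) ^ (((N : ℝ) - 1) / 2) * sinTheta (A k₀) (Ah k₀) := by rw [hsqrt, hsk]
    _ ≤ (2 : ℝ) ^ (((N : ℝ) - 1) / 2) * ⨆ k, sinTheta (A k) (Ah k) :=
      mul_le_mul_of_nonneg_left (le_ciSup (f := fun k => sinTheta (A k) (Ah k)) (Finite.bddAbove_range _) k₀) hpos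
end

section
/- Let A, Ã ∈ ℝ^{m×n} be full column rank matrices. Then their Moore–Penrose pseudoinverses satisfy ‖A† − Ã†‖₂ ≤ √2 · ‖A†‖₂ · ‖Ã†‖₂ · ‖A − Ã‖₂. -/
set_option maxHeartbeats 1000000
open Matrix

/-- Spectral norm (operator 2-norm) of a real matrix. -/
noncomputable def specNorm {m n : Type*} [Fintype m] [Fintype n] [DecidableEq n]
    (A : Matrix m n ℝ) : ℝ :=
  ‖LinearMap.toContinuousLinearMap (Matrix.toEuclideanLin A)‖

/-- Moore–Penrose pseudoinverse of a full-column-rank matrix. -/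
noncomputable def pinv {m n : ℕ} (B : Matrix (Fin m) (Fin n) ℝ) : Matrix (Fin n) (Fin m) ℝ :=
  (Bᵀ * B)⁻¹ * Bᵀ

open scoped Matrix.Norms.L2Operator

lemma specNorm_eq_norm {m n : Type*} [Fintype m] [Fintype n] [DecidableEq n]
    (A : Matrix m n ℝ) : specNorm A = ‖A‖ := rfl

lemma l2_opNorm_transpose {m n : ℕ} (A : Matrix (Fin m) (Fin n) ℝ) : ‖Aᵀ‖ = ‖A‖ := by
  rw [← Matrix.conjTranspose_eq_transpose_of_trivial, Matrix.l2_opNorm_conjTranspose]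

lemma isUnit_transpose_mul_self {m n : ℕ} (B : Matrix (Fin m) (Fin n) ℝ)
    (hB : B.rank = n) : IsUnit (Bᵀ * B) := by
  have h1 : (Bᵀ * B).rank = n := by rw [Matrix.rank_transpose_mul_self, hB]
  rw [← Matrix.mulVec_surjective_iff_isUnit]
  have hrange : LinearMap.range (Bᵀ * B).mulVecLin = ⊤ := by
    apply Submodule.eq_top_of_finrank_eq
    rw [Matrix.rank] at h1
    simp [h1]
  intro v
  obtain ⟨w, hw⟩ := (LinearMap.range_eq_top.mp hrange) v
  exact ⟨w, hw⟩

lemma norm_proj_le_one {m : ℕ} (P : Matrix (Fin m) (Fin m) ℝ)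
    (hs : Pᵀ = P) (hi : P * P = P) : ‖P‖ ≤ 1 := by
  have h := Matrix.l2_opNorm_conjTranspose_mul_self P
  rw [Matrix.conjTranspose_eq_transpose_of_trivial, hs, hi] at h
  nlinarith [norm_nonneg P]

lemma cs2 (a1 a2 b1 b2 : ℝ) (ha1 : 0 ≤ a1) (ha2 : 0 ≤ a2) (hb1 : 0 ≤ b1) (hb2 : 0 ≤ b2) :
    a1 * b1 + a2 * b2 ≤ Real.sqrt (a1 ^ 2 + a2 ^ 2) * Real.sqrt (b1 ^ 2 + b2 ^ 2) := by
  have h : (a1 * b1 + a2 * b2) ^ 2 ≤ (a1 ^ 2 + a2 ^ 2) * (b1 ^ 2 + b2 ^ 2) := by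
    nlinarith [sq_nonneg (a1 * b2 - a2 * b1)]
  calc a1 * b1 + a2 * b2 = Real.sqrt ((a1 * b1 + a2 * b2) ^ 2) :=
        (Real.sqrt_sq (by positivity)).symm
    _ ≤ Real.sqrt ((a1 ^ 2 + a2 ^ 2) * (b1 ^ 2 + b2 ^ 2)) := Real.sqrt_le_sqrt h
    _ = _ := Real.sqrt_mul (by positivity) _

lemma pyth_norm {k m : ℕ} (T1 T2 : Matrix (Fin k) (Fin m) ℝ) (Q : Matrix (Fin m) (Fin m) ℝ)
    (hQs : Qᵀ = Q) (hQi : Q * Q = Q) (h1 : T1 * Q = T1) (h2 : T2 * Q = 0) :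
    ‖T1 + T2‖ ≤ Real.sqrt (‖T1‖ ^ 2 + ‖T2‖ ^ 2) := by
  rw [Matrix.l2_opNorm_def]
  apply ContinuousLinearMap.opNorm_le_bound _ (Real.sqrt_nonneg _)
  intro x
  set y : EuclideanSpace ℝ (Fin m) := Matrix.toEuclideanLin Q x with hy
  set z : EuclideanSpace ℝ (Fin m) := x - y with hz
  have hcomp : ∀ (T : Matrix (Fin k) (Fin m) ℝ),
      Matrix.toEuclideanLin T y = Matrix.toEuclideanLin (T * Q) x := by
    intro T
    simp [hy, Matrix.toEuclideanLin_apply, Matrix.mulVec_mulVec]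
  -- decomposition of the applied vector
  have hdec : Matrix.toEuclideanLin (T1 + T2) x
      = Matrix.toEuclideanLin T1 y + Matrix.toEuclideanLin T2 z := by
    have e1 : Matrix.toEuclideanLin T1 x = Matrix.toEuclideanLin T1 y := by
      rw [hcomp, h1]
    have e2 : Matrix.toEuclideanLin T2 y = 0 := by
      rw [hcomp, h2]; simp
    have : Matrix.toEuclideanLin T2 x = Matrix.toEuclideanLin T2 z := by
      rw [hz, map_sub, e2, sub_zero]
    rw [map_add, LinearMap.add_apply, e1, this]
  -- orthogonality
  have hinner : (inner ℝ y z : ℝ) = 0 := by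
    have key : ∀ w u : Fin m → ℝ, (Q *ᵥ w) ⬝ᵥ u = w ⬝ᵥ (Q *ᵥ u) := by
      intro w u
      rw [dotProduct_comm, Matrix.dotProduct_mulVec, ← Matrix.mulVec_transpose, hQs,
        dotProduct_comm]
    have hdot : ∀ v : Fin m → ℝ, (Q *ᵥ v) ⬝ᵥ (v - Q *ᵥ v) = 0 := by
      intro v
      rw [key]
      have : Q *ᵥ (v - Q *ᵥ v) = 0 := by
        rw [Matrix.mulVec_sub, Matrix.mulVec_mulVec, hQi, sub_self]
      rw [this, dotProduct_zero]
    have := hdot (fun i => x i)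
    simpa [PiLp.inner_apply, RCLike.inner_apply, dotProduct, hy, hz,
      Matrix.toEuclideanLin_apply, Finset.mul_sum, Pi.sub_apply, mul_comm] using this
  have hxyz : ‖x‖ ^ 2 = ‖y‖ ^ 2 + ‖z‖ ^ 2 := by
    have hx : x = y + z := by rw [hz]; abel
    calc ‖x‖ ^ 2 = ‖y + z‖ ^ 2 := by rw [← hx]
      _ = ‖y‖ ^ 2 + 2 * (inner ℝ y z : ℝ) + ‖z‖ ^ 2 := norm_add_sq_real y z
      _ = ‖y‖ ^ 2 + ‖z‖ ^ 2 := by rw [hinner]; ring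
  -- norm bounds for each piece
  have hb1 : ‖Matrix.toEuclideanLin T1 y‖ ≤ ‖T1‖ * ‖y‖ := by
    rw [Matrix.l2_opNorm_def]
    exact (LinearMap.toContinuousLinearMap (Matrix.toEuclideanLin T1)).le_opNorm y
  have hb2 : ‖Matrix.toEuclideanLin T2 z‖ ≤ ‖T2‖ * ‖z‖ := by
    rw [Matrix.l2_opNorm_def]
    exact (LinearMap.toContinuousLinearMap (Matrix.toEuclideanLin T2)).le_opNorm z
  calc ‖LinearMap.toContinuousLinearMap (Matrix.toEuclideanLin (T1 + T2)) x‖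
      = ‖Matrix.toEuclideanLin T1 y + Matrix.toEuclideanLin T2 z‖ := by
        rw [show (LinearMap.toContinuousLinearMap (Matrix.toEuclideanLin (T1 + T2))) x
          = Matrix.toEuclideanLin (T1 + T2) x from rfl, hdec]
    _ ≤ ‖Matrix.toEuclideanLin T1 y‖ + ‖Matrix.toEuclideanLin T2 z‖ := norm_add_le _ _
    _ ≤ ‖T1‖ * ‖y‖ + ‖T2‖ * ‖z‖ := add_le_add hb1 hb2
    _ ≤ Real.sqrt (‖T1‖ ^ 2 + ‖T2‖ ^ 2) * Real.sqrt (‖y‖ ^ 2 + ‖z‖ ^ 2) :=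
        cs2 _ _ _ _ (norm_nonneg _) (norm_nonneg _) (norm_nonneg _) (norm_nonneg _)
    _ = Real.sqrt (‖T1‖ ^ 2 + ‖T2‖ ^ 2) * ‖x‖ := by
        rw [← hxyz, Real.sqrt_sq (norm_nonneg _)]

lemma wedin_aux {m n : ℕ} (A B : Matrix (Fin m) (Fin n) ℝ)
    (hA : A.rank = n) (hB : B.rank = n) (hle : ‖pinv B‖ ≤ ‖pinv A‖) :
    ‖pinv B - pinv A‖ ≤ Real.sqrt 2 * ‖pinv A‖ * ‖pinv B‖ * ‖B - A‖ := by
  have hAu : IsUnit (Aᵀ * A) := isUnit_transpose_mul_self A hA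
  have hBu : IsUnit (Bᵀ * B) := isUnit_transpose_mul_self B hB
  have hAd : IsUnit (Aᵀ * A).det := (Matrix.isUnit_iff_isUnit_det _).mp hAu
  have hBd : IsUnit (Bᵀ * B).det := (Matrix.isUnit_iff_isUnit_det _).mp hBu
  have hpA : pinv A * A = 1 := by
    rw [pinv, Matrix.mul_assoc, Matrix.nonsing_inv_mul _ hAd]
  have hpB : pinv B * B = 1 := by
    rw [pinv, Matrix.mul_assoc, Matrix.nonsing_inv_mul _ hBd]
  have hinvsymA : ((Aᵀ * A)⁻¹)ᵀ = (Aᵀ * A)⁻¹ := by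
    rw [Matrix.transpose_nonsing_inv, Matrix.transpose_mul, Matrix.transpose_transpose]
  have hinvsymB : ((Bᵀ * B)⁻¹)ᵀ = (Bᵀ * B)⁻¹ := by
    rw [Matrix.transpose_nonsing_inv, Matrix.transpose_mul, Matrix.transpose_transpose]
  set Q : Matrix (Fin m) (Fin m) ℝ := A * pinv A with hQ
  have hQs : Qᵀ = Q := by
    rw [hQ, pinv, Matrix.transpose_mul, Matrix.transpose_mul, hinvsymA,
      Matrix.transpose_transpose]
    rw [Matrix.mul_assoc]
  have hQi : Q * Q = Q := by
    rw [hQ, Matrix.mul_assoc, ← Matrix.mul_assoc (pinv A), hpA, Matrix.one_mul]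
  set E : Matrix (Fin m) (Fin n) ℝ := B - A with hE
  set T1 : Matrix (Fin n) (Fin m) ℝ := -(pinv B * E * pinv A) with hT1
  set T2 : Matrix (Fin n) (Fin m) ℝ := pinv B * (1 - Q) with hT2
  have hdecomp : pinv B - pinv A = T1 + T2 := by
    have e1 : pinv B * E * pinv A = pinv A - pinv B * A * pinv A := by
      rw [hE, Matrix.mul_sub, hpB, Matrix.sub_mul, Matrix.one_mul]
    have e2 : T2 = pinv B - pinv B * A * pinv A := by
      rw [hT2, Matrix.mul_sub, Matrix.mul_one, hQ, ← Matrix.mul_assoc]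
    rw [hT1, e1, e2]
    abel
  have hT1Q : T1 * Q = T1 := by
    rw [hT1, hQ, Matrix.neg_mul, Matrix.mul_assoc, ← Matrix.mul_assoc (pinv A), hpA,
      Matrix.one_mul]
  have hT2Q : T2 * Q = 0 := by
    rw [hT2, Matrix.mul_assoc, Matrix.sub_mul, Matrix.one_mul, hQi, sub_self, Matrix.mul_zero]
  -- norm bound for T1
  have hnE : (0:ℝ) ≤ ‖E‖ := norm_nonneg _
  have hnA : (0:ℝ) ≤ ‖pinv A‖ := norm_nonneg _
  have hnB : (0:ℝ) ≤ ‖pinv B‖ := norm_nonneg _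
  have hnT1 : ‖T1‖ ≤ ‖pinv A‖ * ‖pinv B‖ * ‖E‖ := by
    rw [hT1, norm_neg]
    calc ‖pinv B * E * pinv A‖ ≤ ‖pinv B * E‖ * ‖pinv A‖ := Matrix.l2_opNorm_mul _ _
      _ ≤ ‖pinv B‖ * ‖E‖ * ‖pinv A‖ := by
          gcongr
          exact Matrix.l2_opNorm_mul _ _
      _ = ‖pinv A‖ * ‖pinv B‖ * ‖E‖ := by ring
  -- norm bound for T2
  have hprojQ : ‖(1 : Matrix (Fin m) (Fin m) ℝ) - Q‖ ≤ 1 := by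
    apply norm_proj_le_one
    · rw [Matrix.transpose_sub, Matrix.transpose_one, hQs]
    · rw [Matrix.mul_sub, Matrix.mul_one, Matrix.sub_mul, Matrix.one_mul, hQi]
      abel
  have hAtQ : Aᵀ * (1 - Q) = 0 := by
    have : Aᵀ * Q = Aᵀ := by
      rw [hQ, pinv, ← Matrix.mul_assoc, ← Matrix.mul_assoc,
        show Aᵀ * A * (Aᵀ * A)⁻¹ = 1 from Matrix.mul_nonsing_inv _ hAd, Matrix.one_mul]
    rw [Matrix.mul_sub, Matrix.mul_one, this, sub_self]
  have hT2eq : T2 = (Bᵀ * B)⁻¹ * (Eᵀ * (1 - Q)) := by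
    have : Eᵀ * (1 - Q) = Bᵀ * (1 - Q) := by
      rw [hE, Matrix.transpose_sub, Matrix.sub_mul, hAtQ, sub_zero]
    rw [this, hT2, pinv, Matrix.mul_assoc]
  have hinvnorm : ‖(Bᵀ * B)⁻¹‖ ≤ ‖pinv B‖ * ‖pinv B‖ := by
    have hid : pinv B * (pinv B)ᵀ = (Bᵀ * B)⁻¹ := by
      rw [pinv, Matrix.transpose_mul, Matrix.transpose_transpose, hinvsymB,
        ← Matrix.mul_assoc, Matrix.mul_assoc (Bᵀ * B)⁻¹ Bᵀ B,
        Matrix.nonsing_inv_mul _ hBd, Matrix.one_mul]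
    rw [← hid]
    calc ‖pinv B * (pinv B)ᵀ‖ ≤ ‖pinv B‖ * ‖(pinv B)ᵀ‖ := Matrix.l2_opNorm_mul _ _
      _ = ‖pinv B‖ * ‖pinv B‖ := by rw [l2_opNorm_transpose]
  have hnT2 : ‖T2‖ ≤ ‖pinv A‖ * ‖pinv B‖ * ‖E‖ := by
    calc ‖T2‖ = ‖(Bᵀ * B)⁻¹ * (Eᵀ * (1 - Q))‖ := by rw [hT2eq]
      _ ≤ ‖(Bᵀ * B)⁻¹‖ * ‖Eᵀ * (1 - Q)‖ := Matrix.l2_opNorm_mul _ _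
      _ ≤ (‖pinv B‖ * ‖pinv B‖) * (‖Eᵀ‖ * ‖1 - Q‖) := by
          apply mul_le_mul hinvnorm (Matrix.l2_opNorm_mul _ _) (norm_nonneg _)
          positivity
      _ ≤ (‖pinv A‖ * ‖pinv B‖) * (‖E‖ * 1) := by
          rw [l2_opNorm_transpose]
          apply mul_le_mul (by gcongr) (by gcongr) (by positivity) (by positivity)
      _ = ‖pinv A‖ * ‖pinv B‖ * ‖E‖ := by ring
  set c : ℝ := ‖pinv A‖ * ‖pinv B‖ * ‖E‖ with hc
  have hcnn : 0 ≤ c := by positivity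
  calc ‖pinv B - pinv A‖ = ‖T1 + T2‖ := by rw [hdecomp]
    _ ≤ Real.sqrt (‖T1‖ ^ 2 + ‖T2‖ ^ 2) := pyth_norm T1 T2 Q hQs hQi hT1Q hT2Q
    _ ≤ Real.sqrt (c ^ 2 + c ^ 2) := by
        apply Real.sqrt_le_sqrt
        have h1 : ‖T1‖ ^ 2 ≤ c ^ 2 := by
          apply pow_le_pow_left₀ (norm_nonneg _) hnT1
        have h2 : ‖T2‖ ^ 2 ≤ c ^ 2 := by
          apply pow_le_pow_left₀ (norm_nonneg _) hnT2
        linarith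
    _ = Real.sqrt 2 * c := by
        rw [show c ^ 2 + c ^ 2 = 2 * c ^ 2 by ring, Real.sqrt_mul (by norm_num),
          Real.sqrt_sq hcnn]
    _ = Real.sqrt 2 * ‖pinv A‖ * ‖pinv B‖ * ‖B - A‖ := by rw [hc, hE]; ring

/-- Wedin's perturbation bound for pseudoinverses of full-column-rank matrices:
`‖A† − Ã†‖₂ ≤ √2 · ‖A†‖₂ · ‖Ã†‖₂ · ‖A − Ã‖₂`. -/
theorem wedin_pinv_perturbation {m n : ℕ}
    (A Atil : Matrix (Fin m) (Fin n) ℝ)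
    (hA : A.rank = n) (hAtil : Atil.rank = n) :
    specNorm (pinv A - pinv Atil) ≤
      Real.sqrt 2 * specNorm (pinv A) * specNorm (pinv Atil) * specNorm (A - Atil) := by
  simp only [specNorm_eq_norm]
  rcases le_total ‖pinv Atil‖ ‖pinv A‖ with h | h
  · have := wedin_aux A Atil hA hAtil h
    rw [norm_sub_rev (pinv Atil), norm_sub_rev Atil] at this
    linarith
  · have := wedin_aux Atil A hAtil hA h
    calc ‖pinv A - pinv Atil‖ ≤ Real.sqrt 2 * ‖pinv Atil‖ * ‖pinv A‖ * ‖A - Atil‖ := this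
      _ = Real.sqrt 2 * ‖pinv A‖ * ‖pinv Atil‖ * ‖A - Atil‖ := by ring
end
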